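/- arXiv:2006.15354 — 4 statements merged into one kernel-verified Lean document; each statement's English description precedes it below -/
import Mathlib

section
/- Let Σ⁻¹ be a symmetric positive-definite n×n real matrix, and let R_1, R_2 be two n×n permutation matrices with R = R_2 R_1^T. Then the set Z = { z ∈ R^n : z^T R_1^T Σ⁻¹ R_1 z = z^T R_2^T Σ⁻¹ R_2 z } equals all of R^n if Σ⁻¹ and R commute, and has Lebesgue measure zero if Σ⁻¹ and R do not commute. -/
open Matrix MeasureTheory

lemma perm_orthT {n : ℕ} (σ : Equiv.Perm (Fin n)) :
    (σ.permMatrix ℝ)ᵀ * σ.permMatrix ℝ = 1 := by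
  rw [← PEquiv.toMatrix_symm, ← PEquiv.toMatrix_trans, ← Equiv.toPEquiv_symm,
    ← Equiv.toPEquiv_trans]
  simp

lemma perm_orth {n : ℕ} (σ : Equiv.Perm (Fin n)) :
    σ.permMatrix ℝ * (σ.permMatrix ℝ)ᵀ = 1 := by
  rw [← PEquiv.toMatrix_symm, ← PEquiv.toMatrix_trans, ← Equiv.toPEquiv_symm,
    ← Equiv.toPEquiv_trans]
  simp

lemma quad_expand {n : ℕ} (M : Matrix (Fin n) (Fin n) ℝ) (x v : Fin n → ℝ) (t : ℝ) :
    (x + t • v) ⬝ᵥ M *ᵥ (x + t • v)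
      = (v ⬝ᵥ M *ᵥ v) * t ^ 2 + (x ⬝ᵥ M *ᵥ v + v ⬝ᵥ M *ᵥ x) * t + x ⬝ᵥ M *ᵥ x := by
  simp only [mulVec_add, mulVec_smul, dotProduct_add, add_dotProduct, smul_dotProduct,
    dotProduct_smul, smul_eq_mul]
  ring

lemma quad_root_finite {a b c : ℝ} (h : a ≠ 0 ∨ b ≠ 0) :
    {t : ℝ | a * t ^ 2 + b * t + c = 0}.Finite := by
  have hp : (Polynomial.C a * Polynomial.X ^ 2 + Polynomial.C b * Polynomial.X
      + Polynomial.C c : Polynomial ℝ) ≠ 0 := by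
    intro h0
    rcases h with h | h
    · apply h
      have := congrArg (fun p => Polynomial.coeff p 2) h0
      simpa using this
    · apply h
      have := congrArg (fun p => Polynomial.coeff p 1) h0
      simpa using this
  apply Set.Finite.subset (Polynomial.finite_setOf_isRoot hp)
  intro t ht
  simp only [Set.mem_setOf_eq, Polynomial.IsRoot.def] at ht ⊢
  simp [ht]

lemma quad_zero_set_volume {n : ℕ} (M : Matrix (Fin n) (Fin n) ℝ) (hsym : Mᵀ = M)
    (hM : M ≠ 0) : volume {z : Fin n → ℝ | z ⬝ᵥ M *ᵥ z = 0} = 0 := by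
  classical
  cases n with
  | zero => exact absurd (Subsingleton.elim M 0) hM
  | succ m =>
  -- find a nonzero entry
  have hex : ∃ i j, M i j ≠ 0 := by
    by_contra h
    push_neg at h
    exact hM (by ext i j; simpa using h i j)
  obtain ⟨i, j, hij⟩ := hex
  set v : Fin (m + 1) → ℝ := Pi.single i 1 with hv
  have hvv : v ⬝ᵥ M *ᵥ v = M i i := by
    simp [hv, mulVec, dotProduct, Pi.single_apply]
  set x : (Fin m → ℝ) → (Fin (m + 1) → ℝ) := fun y => i.insertNth 0 y with hx
  have hins : ∀ (t : ℝ) (y : Fin m → ℝ), i.insertNth t y = x y + t • v := by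
    intro t y
    funext k
    rcases eq_or_ne k i with rfl | hk
    · simp [hx, hv]
    · obtain ⟨j', rfl⟩ := Fin.exists_succAbove_eq hk
      simp [hx, hv, Pi.single_eq_of_ne (Fin.succAbove_ne i j')]
  set b : (Fin m → ℝ) → ℝ := fun y => x y ⬝ᵥ M *ᵥ v + v ⬝ᵥ M *ᵥ x y with hb
  have hbformula : ∀ y, b y = ∑ j', (M i (i.succAbove j') + M (i.succAbove j') i) * y j' := by
    intro y
    simp only [hb, hx, hv, dotProduct, mulVec, Pi.single_apply, mul_ite, mul_one, mul_zero,
      ite_mul, one_mul, zero_mul, Finset.sum_ite_eq', Finset.sum_ite_eq, Finset.mem_univ,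
      if_true]
    rw [Fin.sum_univ_succAbove (fun k => (i.insertNth (0:ℝ) y : Fin (m+1) → ℝ) k * M k i) i,
        Fin.sum_univ_succAbove (fun l => M i l * (i.insertNth (0:ℝ) y : Fin (m+1) → ℝ) l) i]
    simp only [Fin.insertNth_apply_same, Fin.insertNth_apply_succAbove, mul_zero, zero_mul,
      zero_add, ← Finset.sum_add_distrib]
    exact Finset.sum_congr rfl fun j' _ => by ring
  -- the slice sets
  have hslice : ∀ (y : Fin m → ℝ), {t : ℝ | i.insertNth t y ⬝ᵥ M *ᵥ i.insertNth t y = 0}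
      = {t : ℝ | M i i * t ^ 2 + b y * t + (x y ⬝ᵥ M *ᵥ x y) = 0} := by
    intro y
    ext t
    simp only [Set.mem_setOf_eq]
    rw [hins t y, quad_expand, hvv]
  -- bad set
  have key : ∃ bad : Set (Fin m → ℝ), volume bad = 0 ∧ ∀ y ∉ bad,
      {t : ℝ | i.insertNth t y ⬝ᵥ M *ᵥ i.insertNth t y = 0}.Finite := by
    rcases eq_or_ne (M i i) 0 with ha | ha
    · -- use the linear coefficient
      have hji : j ≠ i := by rintro rfl; exact hij ha
      obtain ⟨j₀, hj₀⟩ := Fin.exists_succAbove_eq hji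
      set φ : (Fin m → ℝ) →ₗ[ℝ] ℝ :=
        { toFun := fun y => ∑ j', (M i (i.succAbove j') + M (i.succAbove j') i) * y j'
          map_add' := by intro y z; simp [mul_add, Finset.sum_add_distrib]
          map_smul' := by
            intro c y
            simp only [Pi.smul_apply, smul_eq_mul, RingHom.id_apply, Finset.mul_sum]
            exact Finset.sum_congr rfl fun _ _ => by ring } with hφ
      have hMji : M j i = M i j := by
        rw [show M j i = Mᵀ i j from rfl, hsym]
      have hφne : φ ≠ 0 := by
        intro h0
        have h1 : φ (Pi.single j₀ 1) = 0 := by rw [h0]; simp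
        rw [hφ] at h1
        simp only [LinearMap.coe_mk, AddHom.coe_mk, Pi.single_apply, mul_ite, mul_one,
          mul_zero, Finset.sum_ite_eq', Finset.mem_univ, if_true, hj₀] at h1
        rw [hMji] at h1
        apply hij
        linarith
      refine ⟨(LinearMap.ker φ : Submodule ℝ (Fin m → ℝ)), ?_, ?_⟩
      · exact Measure.addHaar_submodule volume (LinearMap.ker φ)
          (by simpa [Ne, LinearMap.ker_eq_top] using hφne)
      · intro y hy
        rw [hslice y]
        have hby : b y ≠ 0 := by
          rw [hbformula y]
          intro h0
          exact hy (by simpa [hφ, LinearMap.mem_ker] using h0)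
        exact quad_root_finite (Or.inr hby)
    · refine ⟨∅, measure_empty, fun y _ => ?_⟩
      rw [hslice y]
      exact quad_root_finite (Or.inl ha)
  obtain ⟨bad, hbad0, hbadfin⟩ := key
  -- Fubini
  set f : (Fin (m+1) → ℝ) → ℝ := fun z => z ⬝ᵥ M *ᵥ z with hf
  have hfc : Continuous f := by
    simp only [hf, dotProduct, mulVec]
    exact continuous_finset_sum _ fun k _ => ((continuous_apply k).mul
      (continuous_finset_sum _ fun l _ => (continuous_const.mul (continuous_apply l))))
  have hZm : MeasurableSet {z : Fin (m+1) → ℝ | f z = 0} :=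
    (isClosed_eq hfc continuous_const).measurableSet
  set e := MeasurableEquiv.piFinSuccAbove (fun _ : Fin (m+1) => ℝ) i with he
  have MP := measurePreserving_piFinSuccAbove (fun _ : Fin (m+1) => (volume : Measure ℝ)) i
  set s : Set (ℝ × (Fin m → ℝ)) := e.symm ⁻¹' {z : Fin (m+1) → ℝ | f z = 0} with hs
  have hsm : MeasurableSet s := e.symm.measurable hZm
  have h1 : {z : Fin (m+1) → ℝ | f z = 0} = e ⁻¹' s := by
    rw [hs]; ext z; simp
  have h2 : (volume : Measure (Fin (m+1) → ℝ)) = Measure.pi fun _ => volume := by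
    simp [volume_pi]
  have goal1 : volume {z : Fin (m+1) → ℝ | z ⬝ᵥ M *ᵥ z = 0}
      = (volume.prod (Measure.pi fun _ : Fin m => volume)) s := by
    rw [show {z : Fin (m+1) → ℝ | z ⬝ᵥ M *ᵥ z = 0} = {z : Fin (m+1) → ℝ | f z = 0} from rfl,
      h1, h2]
    exact MP.measure_preimage hsm.nullMeasurableSet
  rw [goal1, ← Measure.prod_swap, Measure.map_apply measurable_swap hsm,
    Measure.measure_prod_null (measurable_swap hsm)]
  filter_upwards [measure_eq_zero_iff_ae_notMem.mp hbad0] with y hy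
  have hset : (Prod.mk y ⁻¹' (Prod.swap ⁻¹' s))
      = {t : ℝ | i.insertNth t y ⬝ᵥ M *ᵥ i.insertNth t y = 0} := by
    ext t
    simp [hs, hf, he, MeasurableEquiv.piFinSuccAbove_symm_apply, Fin.insertNthEquiv, Equiv.coe_fn_mk]
  simp only [Pi.zero_apply, hset]
  exact (hbadfin y hy).measure_zero _

/-- For permutation matrices `R₁, R₂` and a symmetric positive-definite matrix `Σ⁻¹`,
the set where the two permuted quadratic forms agree is all of `ℝⁿ` when `Σ⁻¹`
commutes with `R = R₂R₁ᵀ`, and has Lebesgue measure zero otherwise. -/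
theorem quadratic_equality_set_measure (n : ℕ) (S : Matrix (Fin n) (Fin n) ℝ)
    (hS : S.PosDef) (σ₁ σ₂ : Equiv.Perm (Fin n)) :
    (S * (σ₂.permMatrix ℝ * (σ₁.permMatrix ℝ)ᵀ)
        = (σ₂.permMatrix ℝ * (σ₁.permMatrix ℝ)ᵀ) * S →
      {z : Fin n → ℝ | z ⬝ᵥ ((σ₁.permMatrix ℝ)ᵀ * S * σ₁.permMatrix ℝ) *ᵥ z
          = z ⬝ᵥ ((σ₂.permMatrix ℝ)ᵀ * S * σ₂.permMatrix ℝ) *ᵥ z} = Set.univ)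
    ∧ (¬ (S * (σ₂.permMatrix ℝ * (σ₁.permMatrix ℝ)ᵀ)
        = (σ₂.permMatrix ℝ * (σ₁.permMatrix ℝ)ᵀ) * S) →
      volume {z : Fin n → ℝ | z ⬝ᵥ ((σ₁.permMatrix ℝ)ᵀ * S * σ₁.permMatrix ℝ) *ᵥ z
          = z ⬝ᵥ ((σ₂.permMatrix ℝ)ᵀ * S * σ₂.permMatrix ℝ) *ᵥ z} = 0) := by
  set P₁ := σ₁.permMatrix ℝ with hP₁
  set P₂ := σ₂.permMatrix ℝ with hP₂
  have c2 : ∀ X : Matrix (Fin n) (Fin n) ℝ, P₂ᵀ * (P₂ * X) = X := fun X => by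
    rw [← Matrix.mul_assoc, perm_orthT, Matrix.one_mul]
  have c4 : ∀ X : Matrix (Fin n) (Fin n) ℝ, P₂ * (P₂ᵀ * X) = X := fun X => by
    rw [← Matrix.mul_assoc, perm_orth, Matrix.one_mul]
  have keyAB : (S * (P₂ * P₁ᵀ) = (P₂ * P₁ᵀ) * S) ↔ P₁ᵀ * S * P₁ = P₂ᵀ * S * P₂ := by
    constructor
    · intro hc
      have h := congrArg (fun X => P₂ᵀ * X * P₁) hc
      simp only [Matrix.mul_assoc] at h ⊢
      rw [perm_orthT σ₁, Matrix.mul_one, c2] at h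
      exact h.symm
    · intro hAB
      have h := congrArg (fun X => P₂ * X * P₁ᵀ) hAB
      simp only [Matrix.mul_assoc] at h ⊢
      rw [perm_orth σ₁, Matrix.mul_one, c4] at h
      exact h.symm
  constructor
  · intro hc
    rw [keyAB.mp hc]
    exact Set.eq_univ_of_forall fun z => rfl
  · intro hnc
    have hAB : P₁ᵀ * S * P₁ ≠ P₂ᵀ * S * P₂ := fun h => hnc (keyAB.mpr h)
    set M := P₁ᵀ * S * P₁ - (P₂ᵀ * S * P₂) with hMdef
    have hMne : M ≠ 0 := sub_ne_zero.mpr hAB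
    have hSt : Sᵀ = S := by simpa using hS.1.eq
    have hMsym : Mᵀ = M := by
      simp [hMdef, Matrix.transpose_sub, Matrix.transpose_mul, Matrix.transpose_transpose,
        hSt, Matrix.mul_assoc]
    have hsetEq : {z : Fin n → ℝ | z ⬝ᵥ (P₁ᵀ * S * P₁) *ᵥ z = z ⬝ᵥ (P₂ᵀ * S * P₂) *ᵥ z}
        = {z : Fin n → ℝ | z ⬝ᵥ M *ᵥ z = 0} := by
      ext z
      simp [hMdef, sub_mulVec, dotProduct_sub, sub_eq_zero]
    rw [hsetEq]
    exact quad_zero_set_volume M hMsym hMne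
end

section
/- Let C be a circulant n×n matrix (over C) all of whose eigenvalues have multiplicity 1. If a permutation matrix R commutes with C, then R is a cyclic shift matrix. -/
open Matrix Complex Finset

namespace CircShiftAux

variable (n : ℕ) [NeZero n]

noncomputable def w : ℂ := Complex.exp (2 * Real.pi * Complex.I / n)

lemma hprim : IsPrimitiveRoot (w n) n := Complex.isPrimitiveRoot_exp n (NeZero.ne n)

lemma w_pow_n : w n ^ n = 1 := (hprim n).pow_eq_one

lemma w_pow_mod (m : ℕ) : w n ^ (m % n) = w n ^ m := by
  conv_rhs => rw [← Nat.div_add_mod m n]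
  rw [pow_add, pow_mul, w_pow_n, one_pow, one_mul]

noncomputable def e (a : ZMod n) : ℂ := w n ^ a.val

lemma e_zero : e n 0 = 1 := by simp [e, ZMod.val_zero]

lemma e_add (a b : ZMod n) : e n (a + b) = e n a * e n b := by
  rw [e, e, e, ZMod.val_add, w_pow_mod, pow_add]

lemma e_mul_val (a b : ZMod n) : e n (a * b) = e n b ^ a.val := by
  rw [e, e, ZMod.val_mul, w_pow_mod, ← pow_mul, mul_comm a.val, pow_mul]

lemma e_inj : Function.Injective (e n) := fun a b h =>
  ZMod.val_injective n ((hprim n).pow_inj a.val_lt b.val_lt h)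

lemma e_pow_n (a : ZMod n) : e n a ^ n = 1 := by
  rw [e, ← pow_mul, mul_comm, pow_mul, w_pow_n, one_pow]

lemma e_exp (a b : ZMod n) :
    Complex.exp (2 * Real.pi * Complex.I * a.val * b.val / n) = e n (a * b) := by
  rw [e_mul_val, e, ← pow_mul, w]
  rw [← Complex.exp_nat_mul]
  congr 1
  push_cast
  ring

lemma ortho (t : ZMod n) :
    ∑ m : ZMod n, e n (m * t) = if t = 0 then (n : ℂ) else 0 := by
  have h1 : ∑ m : ZMod n, e n (m * t) = ∑ i ∈ Finset.range n, e n t ^ i := by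
    refine Finset.sum_nbij' (fun m => m.val) (fun i => (i : ZMod n)) ?_ ?_ ?_ ?_ ?_
    · intro m _; exact Finset.mem_range.2 m.val_lt
    · intro i _; exact Finset.mem_univ _
    · intro m _; exact ZMod.natCast_rightInverse m
    · intro i hi; exact ZMod.val_cast_of_lt (Finset.mem_range.1 hi)
    · intro m _; rw [e_mul_val]
  rw [h1]
  by_cases ht : t = 0
  · simp [ht, e_zero]
  · rw [if_neg ht]
    have hne : e n t ≠ 1 := by
      intro h
      exact ht (e_inj n (h.trans (e_zero n).symm))
    rw [geom_sum_eq hne, e_pow_n, sub_self, zero_div]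

lemma e_ne_zero (a : ZMod n) : e n a ≠ 0 := by
  intro h
  have := e_pow_n n a
  rw [h, zero_pow (NeZero.ne n)] at this
  exact zero_ne_one this

end CircShiftAux

open CircShiftAux

/-- A permutation matrix commuting with a circulant matrix whose eigenvalues
(the DFT of the defining vector) are pairwise distinct must be a cyclic shift
matrix. -/
theorem perm_commuting_with_simple_circulant_is_cyclic (n : ℕ) [NeZero n]
    (c : ZMod n → ℂ)
    (hdist : Function.Injective fun ℓ : ZMod n =>
      ∑ j : ZMod n, c j * Complex.exp (2 * Real.pi * Complex.I * ℓ.val * j.val / n))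
    (σ : Equiv.Perm (ZMod n))
    (hcomm : σ.permMatrix ℂ * Matrix.circulant c = Matrix.circulant c * σ.permMatrix ℂ) :
    ∃ k : ZMod n, σ.permMatrix ℂ = Matrix.circulant (Pi.single k (1 : ℂ)) := by
  classical
  set E : ZMod n → ℂ := e n with hE
  -- the DFT of c
  set chat : ZMod n → ℂ := fun ℓ => ∑ j : ZMod n, c j * E (ℓ * j) with hchat
  have hdist' : Function.Injective chat := by
    have : chat = fun ℓ : ZMod n =>
        ∑ j : ZMod n, c j * Complex.exp (2 * Real.pi * Complex.I * ℓ.val * j.val / n) := by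
      funext ℓ
      exact Finset.sum_congr rfl fun j _ => by rw [e_exp]
    rw [this]; exact hdist
  -- entrywise consequence of commutation
  have hrel : ∀ x y : ZMod n, c (σ x - σ y) = c (x - y) := by
    intro x y
    have h := congrFun (congrFun hcomm x) (σ y)
    rw [PEquiv.toMatrix_toPEquiv_mul, PEquiv.mul_toMatrix_toPEquiv] at h
    simpa using h
  -- Step A: convolution identity
  have stepA : ∀ ℓ y : ZMod n, ∑ x : ZMod n, c (x - y) * E (ℓ * x) = E (ℓ * y) * chat ℓ := by
    intro ℓ y
    have := Fintype.sum_equiv (Equiv.addRight y)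
      (fun u : ZMod n => (c u * E (ℓ * u)) * E (ℓ * y))
      (fun x : ZMod n => c (x - y) * E (ℓ * x)) ?_
    · rw [← this, ← Finset.sum_mul, hchat, mul_comm]
    · intro u
      simp only [Equiv.coe_addRight, add_sub_cancel_right]
      rw [mul_add ℓ u y, hE, e_add]
      ring
  -- Step R: using the commutation relation
  have stepR : ∀ ℓ y : ZMod n,
      ∑ x : ZMod n, c (x - σ y) * E (ℓ * σ.symm x) = E (ℓ * y) * chat ℓ := by
    intro ℓ y
    rw [← stepA ℓ y]
    refine Fintype.sum_equiv σ _ _ ?_ |>.symm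
    intro x
    rw [Equiv.symm_apply_apply, hrel]
  -- the key sums
  set A : ZMod n → ZMod n → ℂ := fun ℓ m => ∑ y : ZMod n, E (ℓ * y) * E (-(m * σ y)) with hA
  -- Step B
  have stepB : ∀ ℓ m : ZMod n, chat m * A ℓ m = chat ℓ * A ℓ m := by
    intro ℓ m
    have key : ∑ y : ZMod n, E (-(m * σ y)) * (E (ℓ * y) * chat ℓ)
        = chat m * A ℓ m := by
      -- rewrite LHS using stepR, then massage
      calc ∑ y : ZMod n, E (-(m * σ y)) * (E (ℓ * y) * chat ℓ)
          = ∑ y : ZMod n, E (-(m * σ y)) * ∑ x : ZMod n, c (x - σ y) * E (ℓ * σ.symm x) := by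
            exact Finset.sum_congr rfl fun y _ => by rw [stepR]
        _ = ∑ t : ZMod n, E (-(m * t)) * ∑ x : ZMod n, c (x - t) * E (ℓ * σ.symm x) := by
            exact Fintype.sum_equiv σ _ _ fun y => rfl
        _ = ∑ x : ZMod n, E (ℓ * σ.symm x) * ∑ t : ZMod n, c (x - t) * E (-(m * t)) := by
            simp only [Finset.mul_sum]
            rw [Finset.sum_comm]
            exact Finset.sum_congr rfl fun x _ => Finset.sum_congr rfl fun t _ => by ring
        _ = ∑ x : ZMod n, E (ℓ * σ.symm x) * (E (-(m * x)) * chat m) := by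
            refine Finset.sum_congr rfl fun x _ => ?_
            congr 1
            have := Fintype.sum_equiv (Equiv.subLeft x)
              (fun u : ZMod n => (c u * E (m * u)) * E (-(m * x)))
              (fun t : ZMod n => c (x - t) * E (-(m * t))) ?_
            · rw [← this, ← Finset.sum_mul, hchat, mul_comm]
            · intro u
              simp only [Equiv.subLeft_apply, sub_sub_cancel]
              have : -(m * (x - u)) = -(m * x) + m * u := by ring
              rw [this, hE, e_add]
              ring
        _ = chat m * A ℓ m := by
            rw [hA, Finset.mul_sum]
            refine (Fintype.sum_equiv σ _ _ ?_).symm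
            intro y
            rw [Equiv.symm_apply_apply]
            ring
    rw [← key, hA, Finset.mul_sum]
    exact Finset.sum_congr rfl fun y _ => by ring
  have hAzero : ∀ ℓ m : ZMod n, m ≠ ℓ → A ℓ m = 0 := by
    intro ℓ m hne
    have h := stepB ℓ m
    have : (chat m - chat ℓ) * A ℓ m = 0 := by rw [sub_mul, h, sub_self]
    rcases mul_eq_zero.1 this with h' | h'
    · exact absurd (hdist' (sub_eq_zero.1 h')) hne
    · exact h'
  -- Step C
  have stepC : ∀ ℓ z : ZMod n, A ℓ ℓ * E (ℓ * z) = (n : ℂ) * E (ℓ * σ.symm z) := by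
    intro ℓ z
    have h1 : ∑ m : ZMod n, A ℓ m * E (m * z) = A ℓ ℓ * E (ℓ * z) := by
      refine Finset.sum_eq_single ℓ ?_ ?_
      · intro m _ hm
        rw [hAzero ℓ m hm, zero_mul]
      · intro h; exact absurd (Finset.mem_univ ℓ) h
    have h2 : ∑ m : ZMod n, A ℓ m * E (m * z) = (n : ℂ) * E (ℓ * σ.symm z) := by
      calc ∑ m : ZMod n, A ℓ m * E (m * z)
          = ∑ y : ZMod n, E (ℓ * y) * ∑ m : ZMod n, E (m * (z - σ y)) := by
            rw [hA]
            simp only [Finset.sum_mul]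
            rw [Finset.sum_comm]
            refine Finset.sum_congr rfl fun y _ => ?_
            rw [Finset.mul_sum]
            refine Finset.sum_congr rfl fun m _ => ?_
            have : m * (z - σ y) = -(m * σ y) + m * z := by ring
            rw [this, hE, e_add]
            ring
        _ = ∑ y : ZMod n, E (ℓ * y) * (if z - σ y = 0 then (n : ℂ) else 0) := by
            refine Finset.sum_congr rfl fun y _ => ?_
            rw [hE, ortho]
        _ = (n : ℂ) * E (ℓ * σ.symm z) := by
            rw [Finset.sum_eq_single (σ.symm z)]
            · rw [Equiv.apply_symm_apply, sub_self, if_pos rfl, mul_comm]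
            · intro y _ hy
              rw [if_neg, mul_zero]
              intro h
              apply hy
              have : σ y = z := by
                have := sub_eq_zero.1 h
                exact this.symm
              rw [← this, Equiv.symm_apply_apply]
            · intro h; exact absurd (Finset.mem_univ _) h
    rw [← h1, h2]
  -- evaluate at z = σ 0
  have hdiag : ∀ ℓ : ZMod n, A ℓ ℓ * E (ℓ * σ 0) = (n : ℂ) := by
    intro ℓ
    have := stepC ℓ (σ 0)
    rw [Equiv.symm_apply_apply, mul_zero, hE, e_zero, mul_one] at this
    exact this
  have hnne : (n : ℂ) ≠ 0 := Nat.cast_ne_zero.2 (NeZero.ne n)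
  have hsymm : ∀ z : ZMod n, σ.symm z = z - σ 0 := by
    intro z
    have h := stepC 1 z
    have h2 := hdiag 1
    have h3 : (n : ℂ) * E (1 * z) = (n : ℂ) * (E (1 * σ.symm z) * E (1 * σ 0)) := by
      calc (n : ℂ) * E (1 * z) = A 1 1 * E (1 * σ 0) * E (1 * z) := by rw [h2]
        _ = A 1 1 * E (1 * z) * E (1 * σ 0) := by ring
        _ = (n : ℂ) * E (1 * σ.symm z) * E (1 * σ 0) := by rw [h]
        _ = (n : ℂ) * (E (1 * σ.symm z) * E (1 * σ 0)) := by ring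
    have h4 : E (1 * z) = E (1 * σ.symm z) * E (1 * σ 0) := mul_left_cancel₀ hnne h3
    have h5 : E (1 * z) = E (1 * σ.symm z + 1 * σ 0) := by
      rw [h4]; exact (e_add n _ _).symm
    have h6 : (1 : ZMod n) * z = 1 * σ.symm z + 1 * σ 0 := e_inj n h5
    have h7 : z = σ.symm z + σ 0 := by rw [one_mul, one_mul, one_mul] at h6; exact h6
    rw [eq_sub_iff_add_eq]; exact h7.symm
  have hσ : ∀ x : ZMod n, σ x = x + σ 0 := by
    intro x
    have := hsymm (σ x)
    rw [Equiv.symm_apply_apply] at this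
    rw [eq_sub_iff_add_eq] at this
    rw [← this]
  refine ⟨-σ 0, ?_⟩
  ext i j
  rw [Equiv.Perm.permMatrix, PEquiv.toMatrix_apply, Equiv.toPEquiv_apply,
    Matrix.circulant_apply, Pi.single_apply]
  by_cases h : σ i = j
  · rw [if_pos, if_pos]
    · rw [← h, hσ]; ring
    · simp [h]
  · rw [if_neg, if_neg]
    · intro hij
      apply h
      rw [hσ]
      rw [sub_eq_iff_eq_add] at hij
      rw [hij]; ring
    · intro hh
      have hh2 : σ i = j := by simpa using hh
      exact h hh2
end

section
/- Let R be an n×n permutation matrix and w ∈ C^n a vector with all entries nonzero whose entries are the powers (w)[j] = ω^{ℓ j} of a primitive n-th root of unity for some fixed ℓ coprime to n. If R w = α w for some scalar α, then R is a cyclic shift matrix. -/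
open Matrix Complex

/-- If a permutation matrix has the vector `w[j] = ω^{ℓj}` (with `ℓ` coprime to `n`,
`ω = e^{-2πi/n}`) as an eigenvector, then it is a cyclic shift matrix. -/
theorem perm_with_character_eigenvector_is_cyclic (n : ℕ) [NeZero n]
    (ℓ : ZMod n) (hℓ : Nat.Coprime ℓ.val n)
    (σ : Equiv.Perm (ZMod n)) (α : ℂ) (w : ZMod n → ℂ)
    (hw : ∀ j : ZMod n, w j = Complex.exp (-2 * Real.pi * Complex.I / n) ^ (ℓ.val * j.val))
    (h : (σ.permMatrix ℂ) *ᵥ w = α • w) :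
    ∃ k : ZMod n, σ.permMatrix ℂ = Matrix.circulant (Pi.single k (1 : ℂ)) := by
  set ξ : ℂ := Complex.exp (-2 * Real.pi * Complex.I / n) with hξdef
  have hn : (n:ℕ) ≠ 0 := NeZero.ne n
  have hprim : IsPrimitiveRoot ξ n := by
    have h1 := (Complex.isPrimitiveRoot_exp n hn).inv
    rw [← Complex.exp_neg] at h1
    convert h1 using 2
    exacts [rfl, by ring]
  have hord : n = orderOf ξ := hprim.eq_orderOf
  have hone : ξ ^ n = 1 := hprim.pow_eq_one
  have hmod : ∀ a : ℕ, ξ ^ a = ξ ^ (a % n) := by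
    intro a
    conv_lhs => rw [← Nat.mod_add_div a n]
    rw [pow_add, pow_mul, hone, one_pow, mul_one]
  have hpow : ∀ a b : ℕ, a ≡ b [MOD n] → ξ ^ a = ξ ^ b := by
    intro a b hab
    rw [hmod a, hmod b, hab]
  have hmv : ∀ i, w (σ i) = α * w i := by
    intro i
    have := congrFun h i
    simpa [Equiv.Perm.permMatrix, PEquiv.toMatrix_apply, mulVec, dotProduct,
      Equiv.toPEquiv] using this
  have hwinj : Function.Injective w := by
    intro a b hab
    rw [hw a, hw b] at hab
    rw [hmod (ℓ.val * a.val), hmod (ℓ.val * b.val)] at hab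
    have h1 : ℓ.val * a.val ≡ ℓ.val * b.val [MOD n] :=
      hprim.pow_inj (Nat.mod_lt _ (Nat.pos_of_ne_zero hn))
        (Nat.mod_lt _ (Nat.pos_of_ne_zero hn)) hab
    have h2 : a.val ≡ b.val [MOD n] :=
      Nat.ModEq.cancel_left_of_coprime (Nat.Coprime.symm hℓ) h1
    have h3 : a.val = b.val := by
      rwa [Nat.ModEq, Nat.mod_eq_of_lt (ZMod.val_lt a), Nat.mod_eq_of_lt (ZMod.val_lt b)] at h2
    exact ZMod.val_injective n h3
  have hmul : ∀ a b : ZMod n, w (a + b) = w a * w b := by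
    intro a b
    rw [hw, hw, hw, ← pow_add, ← mul_add]
    exact hpow _ _ (Nat.ModEq.mul_left ℓ.val (ZMod.val_add a b ▸ Nat.mod_modEq _ n))
  have hw0 : w 0 = 1 := by rw [hw]; simp
  have hα : α = w (σ 0) := by
    have := hmv 0
    rw [hw0, mul_one] at this
    exact this.symm
  have hshift : ∀ i, σ i = σ 0 + i := by
    intro i
    apply hwinj
    rw [hmv i, hα, hmul]
  refine ⟨-(σ 0), ?_⟩
  ext i j
  rw [Matrix.circulant_apply]
  have hiff : (σ i = j) ↔ (i - j = -(σ 0)) := by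
    rw [hshift]
    constructor
    · intro h'; rw [← h']; ring
    · intro h'
      have h2 : i = -(σ 0) + j := sub_eq_iff_eq_add.mp h'
      rw [h2]; ring
  by_cases hc : σ i = j
  · have := hiff.mp hc
    rw [this, Pi.single_eq_same]
    simp [Equiv.Perm.permMatrix, PEquiv.toMatrix_apply, Equiv.toPEquiv, hc]
  · have h2 : ¬ (i - j = -(σ 0)) := fun hh => hc (hiff.mpr hh)
    simp [Equiv.Perm.permMatrix, PEquiv.toMatrix_apply, Equiv.toPEquiv, hc, h2,
      Pi.single_apply]
end

section
/- Consider the marginalized likelihood p(y|x) = (1/M) Σ_{ℓ=0}^{L-1} Σ_{k=0}^{K-1} exp(-‖y - R'_ℓ x_k‖²/(2σ²)) (up to a normalizing constant), where x_0,...,x_{K-1} are the sub-signals of x ∈ R^M with M = KL. Then p(y|x) = p(y|g·x) for every y ∈ R^L and every g in the group G_{Π,L} of sub-signal shifts and permutations. Consequently, if K ≥ 2 or L ≥ 2 and G_{Π,L} contains a nontrivial element g with g·x ≠ x, the signal x is not determined uniquely by the likelihood function. -/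
/-- The marginalized likelihood is invariant under the group `G_{Π,L}` of
sub-signal shifts and permutations; consequently, if some element of this
group moves `x`, the signal `x` is not determined uniquely by the likelihood. -/
theorem likelihood_invariant_under_subsignal_group (K L : ℕ) [NeZero K] [NeZero L]
    (σ : ℝ) (hσ : 0 < σ) (x : ZMod K × ZMod L → ℝ)
    (g : Equiv.Perm (ZMod K × ZMod L))
    (hg : ∃ (π : Equiv.Perm (ZMod K)) (f : ZMod K → ZMod L),
      ∀ p : ZMod K × ZMod L, g p = (π p.1, p.2 + f (π p.1))) :
    (∀ y : ZMod L → ℝ,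
      ∑ ℓ : ZMod L, ∑ k : ZMod K,
          Real.exp (-(∑ j : ZMod L, (y j - x (g (k, j - ℓ))) ^ 2) / (2 * σ ^ 2))
        = ∑ ℓ : ZMod L, ∑ k : ZMod K,
            Real.exp (-(∑ j : ZMod L, (y j - x (k, j - ℓ)) ^ 2) / (2 * σ ^ 2)))
    ∧ ((fun p => x (g p)) ≠ x →
        ∃ x' : ZMod K × ZMod L → ℝ, x' ≠ x ∧ ∀ y : ZMod L → ℝ,
          ∑ ℓ : ZMod L, ∑ k : ZMod K,
              Real.exp (-(∑ j : ZMod L, (y j - x' (k, j - ℓ)) ^ 2) / (2 * σ ^ 2))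
            = ∑ ℓ : ZMod L, ∑ k : ZMod K,
                Real.exp (-(∑ j : ZMod L, (y j - x (k, j - ℓ)) ^ 2) / (2 * σ ^ 2))) := by
  obtain ⟨π, f, hgf⟩ := hg
  have key : ∀ y : ZMod L → ℝ,
      ∑ ℓ : ZMod L, ∑ k : ZMod K,
          Real.exp (-(∑ j : ZMod L, (y j - x (g (k, j - ℓ))) ^ 2) / (2 * σ ^ 2))
        = ∑ ℓ : ZMod L, ∑ k : ZMod K,
            Real.exp (-(∑ j : ZMod L, (y j - x (k, j - ℓ)) ^ 2) / (2 * σ ^ 2)) := by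
    intro y
    rw [Finset.sum_comm, Finset.sum_comm (s := Finset.univ (α := ZMod L))]
    calc ∑ k : ZMod K, ∑ ℓ : ZMod L,
            Real.exp (-(∑ j : ZMod L, (y j - x (g (k, j - ℓ))) ^ 2) / (2 * σ ^ 2))
        = ∑ k : ZMod K, ∑ ℓ : ZMod L,
            Real.exp (-(∑ j : ZMod L, (y j - x (π k, j - ℓ)) ^ 2) / (2 * σ ^ 2)) := by
          refine Finset.sum_congr rfl (fun k _ => ?_)
          rw [← Equiv.sum_comp (Equiv.subRight (f (π k)))
            (fun ℓ : ZMod L =>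
              Real.exp (-(∑ j : ZMod L, (y j - x (π k, j - ℓ)) ^ 2) / (2 * σ ^ 2)))]
          refine Finset.sum_congr rfl (fun ℓ _ => ?_)
          have h2 : ∀ j : ZMod L,
              x (g (k, j - ℓ)) = x (π k, j - Equiv.subRight (f (π k)) ℓ) := by
            intro j
            rw [hgf]
            simp only [Equiv.subRight_apply]
            congr 1
            ring
          simp only [h2]
      _ = ∑ k : ZMod K, ∑ ℓ : ZMod L,
            Real.exp (-(∑ j : ZMod L, (y j - x (k, j - ℓ)) ^ 2) / (2 * σ ^ 2)) :=
          Equiv.sum_comp π (fun k => ∑ ℓ : ZMod L,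
            Real.exp (-(∑ j : ZMod L, (y j - x (k, j - ℓ)) ^ 2) / (2 * σ ^ 2)))
  exact ⟨key, fun hne => ⟨fun p => x (g p), hne, fun y => key y⟩⟩
end
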